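/- The composite edge operators M^{(a,h)}₊ := T^a₊ ∘ L^h₊ define a left action of the mirror bicrossproduct M(H) on H*: M^{(1,1)}₊ = id and, for all a, b, h, g ∈ H, M^{(a,h)}₊ ∘ M^{(b,g)}₊ = M^{(a(h₍₁₎ b S(h₍₂₎)), h₍₃₎ g)}₊ (sum over Sweedler components), i.e. the formula (a⊗h) ▷ φ = ⟨S(h₍₁₎)S(a), φ₍₁₎⟩ ⟨h₍₂₎, φ₍₃₎⟩ φ₍₂₎ is a unital action of M(H) with respect to its product (a⊗h)·(b⊗g) = a(h₍₁₎ b S(h₍₂₎)) ⊗ h₍₃₎g. -/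

import Mathlib

/-!
Common setup for formalizing "Ribbon operators in the semidual lattice code model"
(Soglohu–Osei–Osumanu).

`H` is a Hopf algebra over `ℂ`.  Its dual Hopf algebra `H*` is realised as
`Module.Dual ℂ H`, with evaluation pairing `⟨h, φ⟩ = φ h`.  The multiplication of
`H*` is dual to the comultiplication of `H` and the comultiplication of `H*` is
dual to the multiplication of `H`; consequently every edge operator below, given
in the paper by a Sweedler formula on `H*`, is pre-composition
(`LinearMap.dualMap`) with an explicit linear endomorphism of `H`.  For instance
`L^h₊(φ) = ⟨h, S(φ₍₁₎) φ₍₃₎⟩ φ₍₂₎` is exactly `(L^h₊ φ)(x) = Σ φ (S h₍₁₎ * x * h₍₂₎)`.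
Since the antipode is assumed involutive (`S⁻¹ = S`), occurrences of `S⁻¹` are
rendered as `S`.
-/

open TensorProduct

noncomputable section

namespace SemidualKitaev

variable {H : Type} [Ring H] [HopfAlgebra ℂ H]

/-- The antipode of `H`. -/
abbrev S : H →ₗ[ℂ] H := HopfAlgebra.antipode (R := ℂ)

/-- The comultiplication of `H`. -/
abbrev Δ : H →ₗ[ℂ] H ⊗[ℂ] H := Coalgebra.comul (R := ℂ)

/-- The counit of `H`. -/
abbrev ε : H →ₗ[ℂ] ℂ := Coalgebra.counit (R := ℂ)

/-- `sandwich (u ⊗ v) : x ↦ u * x * v`. -/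
def sandwich : H ⊗[ℂ] H →ₗ[ℂ] H →ₗ[ℂ] H :=
  TensorProduct.lift <| LinearMap.mk₂ ℂ
    (fun u v => (LinearMap.mulRight ℂ v) ∘ₗ (LinearMap.mulLeft ℂ u))
    (fun u u' v => LinearMap.ext fun x => by simp [add_mul])
    (fun c u v => LinearMap.ext fun x => by simp [smul_mul_assoc])
    (fun u v v' => LinearMap.ext fun x => by simp [mul_add])
    (fun c u v => LinearMap.ext fun x => by simp [mul_smul_comm])

@[simp] lemma sandwich_tmul (u v x : H) : sandwich (u ⊗ₜ[ℂ] v) x = u * x * v := rfl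

/-! ### Edge (triangle) operators on `H* = Module.Dual ℂ H`

Left-module versions (eq. (3.3) of the paper). -/

/-- `L^h₊(φ) = ⟨h, S(φ₍₁₎) φ₍₃₎⟩ φ₍₂₎`, i.e. `(L^h₊ φ)(x) = Σ φ (S h₍₁₎ * x * h₍₂₎)`. -/
def Lp (h : H) : Module.Dual ℂ H →ₗ[ℂ] Module.Dual ℂ H :=
  (sandwich ((TensorProduct.map S LinearMap.id) (Δ h))).dualMap

/-- `L^h₋(φ) = ⟨h, φ₍₃₎ S⁻¹(φ₍₁₎)⟩ φ₍₂₎`, i.e. `(L^h₋ φ)(x) = Σ φ (S⁻¹ h₍₂₎ * x * h₍₁₎)`,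
with `S⁻¹ = S`. -/
def Lm (h : H) : Module.Dual ℂ H →ₗ[ℂ] Module.Dual ℂ H :=
  (sandwich ((TensorProduct.map S LinearMap.id) ((TensorProduct.comm ℂ H H) (Δ h)))).dualMap

/-- `T^a₊(φ) = ⟨S a, φ₍₁₎⟩ φ₍₂₎`, i.e. `(T^a₊ φ)(x) = φ (S a * x)`. -/
def Tp (a : H) : Module.Dual ℂ H →ₗ[ℂ] Module.Dual ℂ H :=
  (LinearMap.mulLeft ℂ (S a)).dualMap

/-- `T^a₋(φ) = ⟨a, φ₍₂₎⟩ φ₍₁₎`, i.e. `(T^a₋ φ)(x) = φ (x * a)`. -/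
def Tm (a : H) : Module.Dual ℂ H →ₗ[ℂ] Module.Dual ℂ H :=
  (LinearMap.mulRight ℂ a).dualMap

/-! Right-module versions (eq. (3.14) of the paper). -/

/-- `L̃^h₊(φ) = ⟨h, S(φ₍₃₎) φ₍₁₎⟩ φ₍₂₎`, i.e. `(L̃^h₊ φ)(x) = Σ φ (h₍₂₎ * x * S h₍₁₎)`. -/
def Ltp (h : H) : Module.Dual ℂ H →ₗ[ℂ] Module.Dual ℂ H :=
  (sandwich ((TensorProduct.map LinearMap.id S) ((TensorProduct.comm ℂ H H) (Δ h)))).dualMap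

/-- `L̃^h₋(φ) = ⟨h, φ₍₁₎ S⁻¹(φ₍₃₎)⟩ φ₍₂₎`, i.e. `(L̃^h₋ φ)(x) = Σ φ (h₍₁₎ * x * S⁻¹ h₍₂₎)`,
with `S⁻¹ = S`. -/
def Ltm (h : H) : Module.Dual ℂ H →ₗ[ℂ] Module.Dual ℂ H :=
  (sandwich ((TensorProduct.map LinearMap.id S) (Δ h))).dualMap

/-- `T̃^a₊(φ) = ⟨a, φ₍₁₎⟩ φ₍₂₎`, i.e. `(T̃^a₊ φ)(x) = φ (a * x)`. -/
def Ttp (a : H) : Module.Dual ℂ H →ₗ[ℂ] Module.Dual ℂ H :=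
  (LinearMap.mulLeft ℂ a).dualMap

/-- `T̃^a₋(φ) = ⟨S⁻¹ a, φ₍₂₎⟩ φ₍₁₎`, i.e. `(T̃^a₋ φ)(x) = φ (x * S⁻¹ a)`, with `S⁻¹ = S`. -/
def Ttm (a : H) : Module.Dual ℂ H →ₗ[ℂ] Module.Dual ℂ H :=
  (LinearMap.mulRight ℂ (S a)).dualMap

/-- The antipode `S_{H*}` of the dual Hopf algebra: `S_{H*}(φ) = φ ∘ S`. -/
def Sdual : Module.Dual ℂ H →ₗ[ℂ] Module.Dual ℂ H := (S (H := H)).dualMap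

/-- The composite edge operator `M^{(a,h)}₊ = T^a₊ ∘ L^h₊`. -/
def Mp (a h : H) : Module.Dual ℂ H →ₗ[ℂ] Module.Dual ℂ H := Tp a ∘ₗ Lp h

/-- The composite edge operator `M^{(a,h)}₋ = T^a₋ ∘ L^h₋`. -/
def Mm (a h : H) : Module.Dual ℂ H →ₗ[ℂ] Module.Dual ℂ H := Tm a ∘ₗ Lm h

/-- The right action of `M(H)` on `H*` (eq. (2.10) of the paper):
`φ ◁ (a ⊗ h) = ⟨a h₍₁₎, φ₍₁₎⟩ ⟨S h₍₂₎, φ₍₃₎⟩ φ₍₂₎`,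
i.e. `(ract φ a h)(x) = Σ φ (a * h₍₁₎ * x * S h₍₂₎)`. -/
def ract (φ : Module.Dual ℂ H) (a h : H) : Module.Dual ℂ H :=
  (sandwich ((TensorProduct.map (LinearMap.mulLeft ℂ a) S) (Δ h))).dualMap φ

/-- The (convolution) multiplication of the dual Hopf algebra `H*`:
`(φ ∗ ψ)(x) = Σ φ(x₍₁₎) ψ(x₍₂₎)`. -/
def dualMul (φ ψ : Module.Dual ℂ H) : Module.Dual ℂ H :=
  (LinearMap.mul' ℂ ℂ) ∘ₗ (TensorProduct.map φ ψ) ∘ₗ Δ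

/-- The opposite multiplication `∗op` of `H*`. -/
def dualMulOp (φ ψ : Module.Dual ℂ H) : Module.Dual ℂ H := dualMul ψ φ

/-! ### Iterated comultiplications, `Δⁿ h = Σ h₍₁₎ ⊗ (h₍₂₎ ⊗ (⋯ ⊗ h₍ₙ₊₁₎))` -/

def Δ2 : H →ₗ[ℂ] H ⊗[ℂ] (H ⊗[ℂ] H) := (LinearMap.lTensor H Δ) ∘ₗ Δ
def Δ3 : H →ₗ[ℂ] H ⊗[ℂ] (H ⊗[ℂ] (H ⊗[ℂ] H)) := (LinearMap.lTensor H Δ2) ∘ₗ Δ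
def Δ4 : H →ₗ[ℂ] H ⊗[ℂ] (H ⊗[ℂ] (H ⊗[ℂ] (H ⊗[ℂ] H))) := (LinearMap.lTensor H Δ3) ∘ₗ Δ
def Δ5 : H →ₗ[ℂ] H ⊗[ℂ] (H ⊗[ℂ] (H ⊗[ℂ] (H ⊗[ℂ] (H ⊗[ℂ] H)))) :=
  (LinearMap.lTensor H Δ4) ∘ₗ Δ
def Δ6 : H →ₗ[ℂ] H ⊗[ℂ] (H ⊗[ℂ] (H ⊗[ℂ] (H ⊗[ℂ] (H ⊗[ℂ] (H ⊗[ℂ] H))))) :=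
  (LinearMap.lTensor H Δ5) ∘ₗ Δ
def Δ7 : H →ₗ[ℂ] H ⊗[ℂ] (H ⊗[ℂ] (H ⊗[ℂ] (H ⊗[ℂ] (H ⊗[ℂ] (H ⊗[ℂ] (H ⊗[ℂ] H)))))) :=
  (LinearMap.lTensor H Δ6) ∘ₗ Δ
def Δ8 : H →ₗ[ℂ]
    H ⊗[ℂ] (H ⊗[ℂ] (H ⊗[ℂ] (H ⊗[ℂ] (H ⊗[ℂ] (H ⊗[ℂ] (H ⊗[ℂ] (H ⊗[ℂ] H))))))) :=
  (LinearMap.lTensor H Δ7) ∘ₗ Δ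
def Δ9 : H →ₗ[ℂ]
    H ⊗[ℂ] (H ⊗[ℂ] (H ⊗[ℂ] (H ⊗[ℂ] (H ⊗[ℂ] (H ⊗[ℂ] (H ⊗[ℂ] (H ⊗[ℂ] (H ⊗[ℂ] H)))))))) :=
  (LinearMap.lTensor H Δ8) ∘ₗ Δ

lemma mulLeft_add (a a' : H) :
    LinearMap.mulLeft ℂ (a + a') = LinearMap.mulLeft ℂ a + LinearMap.mulLeft ℂ a' :=
  LinearMap.ext fun x => add_mul a a' x

lemma mulLeft_smul (c : ℂ) (a : H) :
    LinearMap.mulLeft ℂ (c • a) = c • LinearMap.mulLeft ℂ a :=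
  LinearMap.ext fun x => smul_mul_assoc c a x

/-! ### The mirror bicrossproduct `M(H) = H^cop ⋈ H` on the vector space `H ⊗ H` -/

/-- `(h₍₁₎ ⊗ h₍₂₎) ⊗ h₍₃₎` version of the 2-fold comultiplication. -/
def Δ2' : H →ₗ[ℂ] (H ⊗[ℂ] H) ⊗[ℂ] H := (LinearMap.rTensor H Δ) ∘ₗ Δ

/-- `mulAction2 ((u ⊗ v) ⊗ w) (b ⊗ g) = (u * b * v) ⊗ (w * g)`. -/
def mulAction2 : (H ⊗[ℂ] H) ⊗[ℂ] H →ₗ[ℂ] (H ⊗[ℂ] H) →ₗ[ℂ] (H ⊗[ℂ] H) :=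
  TensorProduct.lift <| LinearMap.mk₂ ℂ
    (fun (uv : H ⊗[ℂ] H) (w : H) =>
      TensorProduct.map (sandwich uv) (LinearMap.mulLeft ℂ w))
    (fun uv uv' w => by rw [map_add, TensorProduct.map_add_left])
    (fun c uv w => by rw [map_smul, TensorProduct.map_smul_left])
    (fun uv w w' => by rw [mulLeft_add, TensorProduct.map_add_right])
    (fun c uv w => by rw [mulLeft_smul, TensorProduct.map_smul_right])

/-- The product of the mirror bicrossproduct `M(H)`:
`μM (a ⊗ h) (b ⊗ g) = Σ (a * h₍₁₎ * b * S h₍₂₎) ⊗ (h₍₃₎ * g)`. -/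
def μM : (H ⊗[ℂ] H) →ₗ[ℂ] (H ⊗[ℂ] H) →ₗ[ℂ] (H ⊗[ℂ] H) :=
  TensorProduct.lift <| LinearMap.mk₂ ℂ
    (fun (a h : H) =>
      mulAction2 ((TensorProduct.map (TensorProduct.map (LinearMap.mulLeft ℂ a) S)
        LinearMap.id) (Δ2' h)))
    (fun a a' h => by
      rw [mulLeft_add, TensorProduct.map_add_left, TensorProduct.map_add_left,
        LinearMap.add_apply, map_add])
    (fun c a h => by
      rw [mulLeft_smul, TensorProduct.map_smul_left, TensorProduct.map_smul_left,
        LinearMap.smul_apply, map_smul])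
    (fun a h h' => by rw [map_add, map_add, map_add])
    (fun c a h => by rw [map_smul, map_smul, map_smul])

/-- The unit `1 ⊗ 1` of `M(H)`. -/
def oneM : H ⊗[ℂ] H := (1 : H) ⊗ₜ[ℂ] (1 : H)

/-- The counit of `M(H)`: `εM (a ⊗ h) = ε a * ε h`. -/
def εM : H ⊗[ℂ] H →ₗ[ℂ] ℂ :=
  (TensorProduct.lid ℂ ℂ).toLinearMap ∘ₗ TensorProduct.map ε ε

/-- Auxiliary map for the coproduct of `M(H)`: for fixed `a₁, a₂`, it sends
`h₁ ⊗ (h₂ ⊗ (h₃ ⊗ h₄))` to `(a₂ ⊗ h₂) ⊗ ((a₁ * h₁ * S h₃) ⊗ h₄)`. -/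
def deltaMAux (a₁ a₂ : H) :
    H ⊗[ℂ] (H ⊗[ℂ] (H ⊗[ℂ] H)) →ₗ[ℂ] (H ⊗[ℂ] H) ⊗[ℂ] (H ⊗[ℂ] H) :=
  (TensorProduct.map (TensorProduct.mk ℂ H H a₂) LinearMap.id) ∘ₗ
  (TensorProduct.map LinearMap.id
    (TensorProduct.map (LinearMap.mul' ℂ H) LinearMap.id)) ∘ₗ
  (TensorProduct.map LinearMap.id (TensorProduct.assoc ℂ H H H).symm.toLinearMap) ∘ₗ
  (TensorProduct.assoc ℂ H H (H ⊗[ℂ] H)).toLinearMap ∘ₗ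
  (TensorProduct.map (TensorProduct.comm ℂ H H).toLinearMap LinearMap.id) ∘ₗ
  (TensorProduct.assoc ℂ H H (H ⊗[ℂ] H)).symm.toLinearMap ∘ₗ
  (TensorProduct.map (LinearMap.mulLeft ℂ a₁)
    (TensorProduct.map LinearMap.id (TensorProduct.map S LinearMap.id)))

lemma deltaMAux_add_left (a₁ a₁' a₂ : H) :
    deltaMAux (a₁ + a₁') a₂ = deltaMAux a₁ a₂ + deltaMAux (H := H) a₁' a₂ := by
  unfold deltaMAux
  rw [mulLeft_add, TensorProduct.map_add_left]
  simp only [LinearMap.comp_add]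

lemma deltaMAux_smul_left (c : ℂ) (a₁ a₂ : H) :
    deltaMAux (c • a₁) a₂ = c • deltaMAux (H := H) a₁ a₂ := by
  unfold deltaMAux
  rw [mulLeft_smul, TensorProduct.map_smul_left]
  simp only [LinearMap.comp_smul]

lemma deltaMAux_add_right (a₁ a₂ a₂' : H) :
    deltaMAux a₁ (a₂ + a₂') = deltaMAux a₁ a₂ + deltaMAux (H := H) a₁ a₂' := by
  unfold deltaMAux
  rw [map_add, TensorProduct.map_add_left]
  simp only [LinearMap.add_comp]

lemma deltaMAux_smul_right (c : ℂ) (a₁ a₂ : H) :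
    deltaMAux a₁ (c • a₂) = c • deltaMAux (H := H) a₁ a₂ := by
  unfold deltaMAux
  rw [map_smul, TensorProduct.map_smul_left]
  simp only [LinearMap.smul_comp]

/-- `deltaG (a₁ ⊗ a₂) = deltaMAux a₁ a₂`, assembled linearly. -/
def deltaG : H ⊗[ℂ] H →ₗ[ℂ]
    (H ⊗[ℂ] (H ⊗[ℂ] (H ⊗[ℂ] H)) →ₗ[ℂ] (H ⊗[ℂ] H) ⊗[ℂ] (H ⊗[ℂ] H)) :=
  TensorProduct.lift <| LinearMap.mk₂ ℂ deltaMAux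
    deltaMAux_add_left deltaMAux_smul_left deltaMAux_add_right deltaMAux_smul_right

/-- The coproduct of `M(H)`:
`ΔM (a ⊗ h) = Σ (a₍₂₎ ⊗ h₍₂₎) ⊗ ((a₍₁₎ * h₍₁₎ * S h₍₃₎) ⊗ h₍₄₎)`. -/
def ΔM : H ⊗[ℂ] H →ₗ[ℂ] (H ⊗[ℂ] H) ⊗[ℂ] (H ⊗[ℂ] H) :=
  TensorProduct.lift <| LinearMap.mk₂ ℂ
    (fun (a h : H) => (deltaG (Δ a)) (Δ3 h))
    (fun a a' h => by rw [map_add, map_add, LinearMap.add_apply])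
    (fun c a h => by rw [map_smul, map_smul, LinearMap.smul_apply])
    (fun a h h' => by rw [map_add, map_add])
    (fun c a h => by rw [map_smul, map_smul])

/-- The componentwise (tensor-square) product on `M(H) ⊗ M(H)`. -/
def tensorMul2 :
    ((H ⊗[ℂ] H) ⊗[ℂ] (H ⊗[ℂ] H)) →ₗ[ℂ] ((H ⊗[ℂ] H) ⊗[ℂ] (H ⊗[ℂ] H)) →ₗ[ℂ]
      ((H ⊗[ℂ] H) ⊗[ℂ] (H ⊗[ℂ] H)) :=
  TensorProduct.lift <| LinearMap.mk₂ ℂ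
    (fun (u v : H ⊗[ℂ] H) => TensorProduct.map (μM u) (μM v))
    (fun u u' v => by rw [map_add, TensorProduct.map_add_left])
    (fun c u v => by rw [map_smul, TensorProduct.map_smul_left])
    (fun u v v' => by rw [map_add, TensorProduct.map_add_right])
    (fun c u v => by rw [map_smul, TensorProduct.map_smul_right])

/-- The antipode candidate of `M(H)`:
`SM (a ⊗ h) = Σ (1 ⊗ S h₍₂₎) · (S (a * h₍₁₎ * S h₍₃₎) ⊗ 1)`,
where `·` is the mirror product `μM`. -/
def SM : H ⊗[ℂ] H →ₗ[ℂ] H ⊗[ℂ] H :=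
  TensorProduct.lift <| LinearMap.mk₂ ℂ
    (fun (a h : H) =>
      (TensorProduct.lift μM)
        ((TensorProduct.map
            ((TensorProduct.mk ℂ H H 1) ∘ₗ S)
            (((TensorProduct.mk ℂ H H).flip 1) ∘ₗ S ∘ₗ (LinearMap.mul' ℂ H) ∘ₗ
              (TensorProduct.map (LinearMap.mulLeft ℂ a) S)))
          ((TensorProduct.assoc ℂ H H H).toLinearMap
            ((TensorProduct.map (TensorProduct.comm ℂ H H).toLinearMap LinearMap.id)
              ((TensorProduct.assoc ℂ H H H).symm.toLinearMap (Δ2 h))))))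
    (fun a a' h => by
      rw [mulLeft_add, TensorProduct.map_add_left, LinearMap.comp_add, LinearMap.comp_add,
        LinearMap.comp_add, TensorProduct.map_add_right, LinearMap.add_apply, map_add])
    (fun c a h => by
      rw [mulLeft_smul, TensorProduct.map_smul_left, LinearMap.comp_smul, LinearMap.comp_smul,
        LinearMap.comp_smul, TensorProduct.map_smul_right, LinearMap.smul_apply, map_smul])
    (fun a h h' => by simp only [map_add])
    (fun c a h => by simp only [map_smul])

/-- `ℓ ∈ H` is a normalized (two-sided) Haar integral:
`x ℓ = ε(x) ℓ = ℓ x` for all `x`, and `ε(ℓ) = 1`. -/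
def IsHaarIntegral (ℓ : H) : Prop :=
  ε ℓ = 1 ∧ ∀ x : H, x * ℓ = ε x • ℓ ∧ ℓ * x = ε x • ℓ

/-- Fourfold tensor product of operators on `H*`, acting on the four edges
`ψ¹ ⊗ (ψ² ⊗ (ψ³ ⊗ ψ⁴))`. -/
def map4 (f₁ f₂ f₃ f₄ : Module.Dual ℂ H →ₗ[ℂ] Module.Dual ℂ H) :
    Module.Dual ℂ H ⊗[ℂ] (Module.Dual ℂ H ⊗[ℂ] (Module.Dual ℂ H ⊗[ℂ] Module.Dual ℂ H))
      →ₗ[ℂ]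
    Module.Dual ℂ H ⊗[ℂ] (Module.Dual ℂ H ⊗[ℂ] (Module.Dual ℂ H ⊗[ℂ] Module.Dual ℂ H)) :=
  TensorProduct.map f₁ (TensorProduct.map f₂ (TensorProduct.map f₃ f₄))



/-! ### Auxiliary lemmas for Statement 7 -/

lemma antipode_one : S (1 : H) = 1 := by
  have h := HopfAlgebra.mul_antipode_rTensor_comul_apply (R := ℂ) (A := H) 1
  simpa [Bialgebra.comul_one, Algebra.TensorProduct.one_def] using h

lemma counit_smul_left' {w : H} (r : Coalgebra.Repr ℂ w (H × H)) :
    ∑ i ∈ r.index, ε (r.left i) • r.right i = w := by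
  have h := congrArg (TensorProduct.lid ℂ H) (Coalgebra.sum_counit_tmul_eq (R := ℂ) r)
  simp only [map_sum, TensorProduct.lid_tmul, one_smul] at h
  exact h

lemma counit_smul_right' {w : H} (r : Coalgebra.Repr ℂ w (H × H)) :
    ∑ i ∈ r.index, ε (r.right i) • r.left i = w := by
  have h := congrArg (TensorProduct.rid ℂ H) (Coalgebra.sum_tmul_counit_eq (R := ℂ) r)
  simp only [map_sum, TensorProduct.rid_tmul, one_smul] at h
  exact h

lemma repr_two {w : H} (r : Coalgebra.Repr ℂ w (H × H)) (rr : ∀ i : r.ι, Coalgebra.Repr ℂ (r.right i) (H × H)) :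
    ∑ i ∈ r.index, ∑ k ∈ (rr i).index,
      r.left i ⊗ₜ[ℂ] ((rr i).left k ⊗ₜ[ℂ] (rr i).right k) = Δ2 w := by
  have : Δ2 w = (LinearMap.lTensor H Δ) (Δ w) := rfl
  rw [this, ← r.eq, map_sum]
  refine Finset.sum_congr rfl fun i _ => ?_
  rw [LinearMap.lTensor_tmul, ← (rr i).eq, TensorProduct.tmul_sum]

/-- `∑ S(w₍₁₎) w₍₂₎ ⊗ w₍₃₎ = 1 ⊗ w`. -/
lemma L1sum {w : H} (r : Coalgebra.Repr ℂ w (H × H)) (rr : ∀ i : r.ι, Coalgebra.Repr ℂ (r.right i) (H × H)) :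
    ∑ i ∈ r.index, ∑ k ∈ (rr i).index,
      (S (r.left i) * (rr i).left k) ⊗ₜ[ℂ] (rr i).right k = (1 : H) ⊗ₜ[ℂ] w := by
  have h2 := repr_two r rr
  have happ := congrArg ((LinearMap.rTensor H ((LinearMap.mul' ℂ H) ∘ₗ (LinearMap.rTensor H S))) ∘ₗ
    (TensorProduct.assoc ℂ H H H).symm.toLinearMap) h2
  simp only [map_sum, LinearMap.comp_apply, LinearEquiv.coe_coe, TensorProduct.assoc_symm_tmul,
    LinearMap.rTensor_tmul, LinearMap.mul'_apply] at happ
  rw [happ]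
  have hcoa : (TensorProduct.assoc ℂ H H H).symm (Δ2 w) = (LinearMap.rTensor H Δ) (Δ w) :=
    Coalgebra.coassoc_symm_apply w
  rw [show Δ2 w = (LinearMap.lTensor H Δ) (Δ w) from rfl] at hcoa ⊢
  rw [hcoa, ← LinearMap.comp_apply, ← LinearMap.rTensor_comp]
  have hax : (LinearMap.mul' ℂ H ∘ₗ LinearMap.rTensor H S) ∘ₗ Δ
      = (Algebra.linearMap ℂ H) ∘ₗ ε := by
    rw [LinearMap.comp_assoc]; exact HopfAlgebra.mul_antipode_rTensor_comul
  rw [hax, LinearMap.rTensor_comp, LinearMap.comp_apply]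
  have : (LinearMap.rTensor H (ε : H →ₗ[ℂ] ℂ)) (Δ w) = (1 : ℂ) ⊗ₜ[ℂ] w :=
    Coalgebra.rTensor_counit_comul w
  rw [this, LinearMap.rTensor_tmul]
  simp

/-- A representation of `comul (p * q)` from representations of `p` and `q`. -/
def prodRepr {p q : H} (rp : Coalgebra.Repr ℂ p (H × H)) (rq : Coalgebra.Repr ℂ q (H × H)) :
    Coalgebra.Repr ℂ (p * q) ((H × H) × (H × H)) where
  index := rp.index ×ˢ rq.index
  left := fun kl => rp.left kl.1 * rq.left kl.2
  right := fun kl => rp.right kl.1 * rq.right kl.2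
  eq := by
    rw [Bialgebra.comul_mul, ← rp.eq, ← rq.eq, Finset.sum_mul_sum, Finset.sum_product]
    refine Finset.sum_congr rfl fun i _ => Finset.sum_congr rfl fun j _ => ?_
    exact (Algebra.TensorProduct.tmul_mul_tmul _ _ _ _).symm

lemma epsmul {p q : H} (rp : Coalgebra.Repr ℂ p (H × H)) (rq : Coalgebra.Repr ℂ q (H × H)) :
    ∑ k ∈ rp.index, ∑ l ∈ rq.index,
      (rp.left k * rq.left l) * S (rp.right k * rq.right l) = ε (p * q) • (1 : H) := by
  have h := HopfAlgebra.sum_mul_antipode_eq_smul (R := ℂ) (prodRepr rp rq)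
  rw [← h]
  exact (Finset.sum_product (s := rp.index) (t := rq.index)
    (f := fun kl => (prodRepr rp rq).left kl * S ((prodRepr rp rq).right kl))).symm

/-- `auxmap c d e (m ⊗ n) = c * (m * (d * S (n * e)))`. -/
def auxmap (c d e : H) : H ⊗[ℂ] H →ₗ[ℂ] H :=
  TensorProduct.lift <| LinearMap.mk₂ ℂ
    (fun m n => c * (m * (d * S (n * e))))
    (fun m m' n => by simp [add_mul, mul_add])
    (fun t m n => by simp [smul_mul_assoc, mul_smul_comm])
    (fun m n n' => by simp [add_mul, map_add, mul_add])
    (fun t m n => by simp [smul_mul_assoc, map_smul, mul_smul_comm])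

@[simp] lemma auxmap_tmul (c d e m n : H) :
    auxmap c d e (m ⊗ₜ[ℂ] n) = c * (m * (d * S (n * e))) := rfl

/-- `auxmap2 u (m ⊗ n) = m * S (u * n)`. -/
def auxmap2 (u : H) : H ⊗[ℂ] H →ₗ[ℂ] H :=
  TensorProduct.lift <| LinearMap.mk₂ ℂ
    (fun m n => m * S (u * n))
    (fun m m' n => by simp [add_mul])
    (fun t m n => by simp [smul_mul_assoc])
    (fun m n n' => by simp [mul_add, map_add])
    (fun t m n => by simp [map_smul, mul_smul_comm])

@[simp] lemma auxmap2_tmul (u m n : H) : auxmap2 u (m ⊗ₜ[ℂ] n) = m * S (u * n) := rfl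

/-- The antipode is an algebra anti-endomorphism. -/
lemma antipode_mul (u v : H) : S (u * v) = S v * S u := by
  classical
  set ra := Coalgebra.Repr.arbitrary ℂ u with hra
  set rb := Coalgebra.Repr.arbitrary ℂ v with hrb
  set rra : ∀ i : ra.ι, Coalgebra.Repr ℂ (ra.right i) (H × H) :=
    fun i => Coalgebra.Repr.arbitrary ℂ (ra.right i) with hrra
  set rrb : ∀ j : rb.ι, Coalgebra.Repr ℂ (rb.right j) (H × H) :=
    fun j => Coalgebra.Repr.arbitrary ℂ (rb.right j) with hrrb
  have key : S v * S u =
      ∑ j ∈ rb.index, ∑ i ∈ ra.index,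
        (S (rb.left j) * S (ra.left i)) * ((ε (ra.right i) * ε (rb.right j)) • (1 : H)) := by
    conv_lhs => rw [← counit_smul_right' ra, ← counit_smul_right' rb]
    rw [map_sum, map_sum, Finset.sum_mul_sum]
    refine Finset.sum_congr rfl fun j _ => Finset.sum_congr rfl fun i _ => ?_
    rw [map_smul, map_smul, smul_mul_smul_comm, mul_smul_comm, mul_one,
      mul_comm (ε (rb.right j)) (ε (ra.right i))]
  rw [key]
  symm
  have key2 : ∀ j ∈ rb.index, ∀ i ∈ ra.index,
      (S (rb.left j) * S (ra.left i)) * ((ε (ra.right i) * ε (rb.right j)) • (1 : H)) =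
      ∑ l ∈ (rrb j).index, ∑ k ∈ (rra i).index,
        auxmap (S (rb.left j)) ((rrb j).left l) ((rrb j).right l)
          ((S (ra.left i) * (rra i).left k) ⊗ₜ[ℂ] (rra i).right k) := by
    intro j _ i _
    rw [← Bialgebra.counit_mul (R := ℂ), ← epsmul (rra i) (rrb j), Finset.mul_sum,
      Finset.sum_comm]
    refine Finset.sum_congr rfl fun l _ => ?_
    rw [Finset.mul_sum]
    refine Finset.sum_congr rfl fun k _ => ?_
    simp only [auxmap_tmul]
    simp [mul_assoc]
  calc ∑ j ∈ rb.index, ∑ i ∈ ra.index,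
        (S (rb.left j) * S (ra.left i)) * ((ε (ra.right i) * ε (rb.right j)) • (1 : H))
      = ∑ j ∈ rb.index, ∑ l ∈ (rrb j).index, ∑ i ∈ ra.index, ∑ k ∈ (rra i).index,
        auxmap (S (rb.left j)) ((rrb j).left l) ((rrb j).right l)
          ((S (ra.left i) * (rra i).left k) ⊗ₜ[ℂ] (rra i).right k) := by
        refine Finset.sum_congr rfl fun j hj => ?_
        rw [Finset.sum_congr rfl (fun i hi => key2 j hj i hi), Finset.sum_comm]
    _ = ∑ j ∈ rb.index, ∑ l ∈ (rrb j).index,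
        auxmap (S (rb.left j)) ((rrb j).left l) ((rrb j).right l) ((1 : H) ⊗ₜ[ℂ] u) := by
        refine Finset.sum_congr rfl fun j _ => Finset.sum_congr rfl fun l _ => ?_
        rw [← L1sum ra rra]
        simp only [map_sum]
    _ = ∑ j ∈ rb.index, ∑ l ∈ (rrb j).index,
        auxmap2 u ((S (rb.left j) * (rrb j).left l) ⊗ₜ[ℂ] (rrb j).right l) := by
        refine Finset.sum_congr rfl fun j _ => Finset.sum_congr rfl fun l _ => ?_
        simp [mul_assoc]
    _ = auxmap2 u ((1 : H) ⊗ₜ[ℂ] v) := by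
        rw [← L1sum rb rrb]
        simp only [map_sum]
    _ = S (u * v) := by simp

lemma skew_sum (hS : ∀ x : H, S (S x) = x) {w : H} (r : Coalgebra.Repr ℂ w (H × H)) :
    ∑ i ∈ r.index, S (r.right i) * r.left i = ε w • (1 : H) := by
  have h1 : ∀ i, S (r.right i) * r.left i = S (S (r.left i) * r.right i) := by
    intro i; rw [antipode_mul, hS]
  rw [Finset.sum_congr rfl fun i _ => h1 i, ← map_sum,
    HopfAlgebra.sum_antipode_mul_eq_smul r, map_smul, antipode_one]

/-- `κm (u ⊗ v) = S v * u`. -/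
def κm : H ⊗[ℂ] H →ₗ[ℂ] H :=
  (LinearMap.mul' ℂ H) ∘ₗ (LinearMap.rTensor H S) ∘ₗ (TensorProduct.comm ℂ H H).toLinearMap

@[simp] lemma κm_tmul (u v : H) : κm (u ⊗ₜ[ℂ] v) = S v * u := rfl

lemma κm_comul (hS : ∀ x : H, S (S x) = x) (w : H) : κm (Δ w) = ε w • (1 : H) := by
  have r := Coalgebra.Repr.arbitrary ℂ w
  rw [← r.eq, map_sum]
  exact skew_sum hS r

/-- `∑ S(w₍₂₎) w₍₁₎ ⊗ w₍₃₎ = 1 ⊗ w` (uses `S² = id`). -/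
lemma SkewL1sum (hS : ∀ x : H, S (S x) = x) {w : H} (r : Coalgebra.Repr ℂ w (H × H))
    (rr : ∀ i : r.ι, Coalgebra.Repr ℂ (r.right i) (H × H)) :
    ∑ i ∈ r.index, ∑ k ∈ (rr i).index,
      (S ((rr i).left k) * r.left i) ⊗ₜ[ℂ] (rr i).right k = (1 : H) ⊗ₜ[ℂ] w := by
  have h2 := repr_two r rr
  have happ := congrArg ((LinearMap.rTensor H κm) ∘ₗ
    (TensorProduct.assoc ℂ H H H).symm.toLinearMap) h2
  simp only [map_sum, LinearMap.comp_apply, LinearEquiv.coe_coe, TensorProduct.assoc_symm_tmul,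
    LinearMap.rTensor_tmul, κm_tmul] at happ
  rw [happ]
  have hcoa : (TensorProduct.assoc ℂ H H H).symm (Δ2 w) = (LinearMap.rTensor H Δ) (Δ w) :=
    Coalgebra.coassoc_symm_apply w
  rw [hcoa, ← LinearMap.comp_apply, ← LinearMap.rTensor_comp]
  have hr := Coalgebra.Repr.arbitrary ℂ w
  rw [← hr.eq, map_sum]
  have hterm : ∀ i ∈ hr.index, (LinearMap.rTensor H (κm ∘ₗ Δ)) (hr.left i ⊗ₜ[ℂ] hr.right i)
      = (1 : H) ⊗ₜ[ℂ] (ε (hr.left i) • hr.right i) := by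
    intro i _
    rw [LinearMap.rTensor_tmul, LinearMap.comp_apply, κm_comul hS, TensorProduct.smul_tmul,
      TensorProduct.tmul_smul]
  rw [Finset.sum_congr rfl hterm, ← TensorProduct.tmul_sum, counit_smul_left' hr]

/-- `sw2 t y`: for `t = u ⊗ v`, gives `S u * y * v`. -/
def sw2 : H ⊗[ℂ] H →ₗ[ℂ] H →ₗ[ℂ] H := sandwich ∘ₗ TensorProduct.map S LinearMap.id

@[simp] lemma sw2_tmul (u v y : H) : sw2 (u ⊗ₜ[ℂ] v) y = S u * y * v := rfl

lemma sw2_mul (s t : H ⊗[ℂ] H) (y : H) : sw2 (s * t) y = sw2 t (sw2 s y) := by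
  induction t using TensorProduct.induction_on with
  | zero => simp [mul_zero]
  | add t₁ t₂ ih₁ ih₂ => simp_all [mul_add, add_mul]
  | tmul g₁ g₂ =>
    induction s using TensorProduct.induction_on with
    | zero => simp [zero_mul]
    | add s₁ s₂ ih₁ ih₂ => simp_all [add_mul, mul_add]
    | tmul z₁ z₂ =>
      simp [Algebra.TensorProduct.tmul_mul_tmul, antipode_mul, mul_assoc]

/-- `Cmap y (v₁ ⊗ v₂) = sw2 (Δ v₂) (v₁ * y)`. -/
def Cmap (y : H) : H ⊗[ℂ] H →ₗ[ℂ] H :=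
  TensorProduct.lift (((sw2 ∘ₗ Δ).flip : H →ₗ[ℂ] H →ₗ[ℂ] H) ∘ₗ LinearMap.mulRight ℂ y)

@[simp] lemma Cmap_tmul (y v₁ v₂ : H) : Cmap y (v₁ ⊗ₜ[ℂ] v₂) = sw2 (Δ v₂) (v₁ * y) := rfl

lemma Cmap_comul (hS : ∀ x : H, S (S x) = x) (y w : H) : Cmap y (Δ w) = y * w := by
  have r := Coalgebra.Repr.arbitrary ℂ w
  have rr : ∀ i : r.ι, Coalgebra.Repr ℂ (r.right i) (H × H) :=
    fun i => Coalgebra.Repr.arbitrary ℂ (r.right i)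
  have hskew := congrArg ((sandwich (H := H)).flip y) (SkewL1sum hS r rr)
  simp only [map_sum, LinearMap.flip_apply, sandwich_tmul, one_mul] at hskew
  rw [← r.eq, map_sum, ← hskew]
  refine Finset.sum_congr rfl fun i _ => ?_
  rw [Cmap_tmul, ← (rr i).eq, map_sum, LinearMap.sum_apply]
  refine Finset.sum_congr rfl fun k _ => ?_
  simp [mul_assoc]

/-- `fbm b x' u = S b * (S u * x')`. -/
def fbm (b x' : H) : H →ₗ[ℂ] H :=
  LinearMap.mulLeft ℂ (S b) ∘ₗ LinearMap.mulRight ℂ x' ∘ₗ S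

/-- `Ωmap b x' (u ⊗ (v ⊗ w)) = sw2 (Δ w) (v * (S b * (S u * x')))`. -/
def Ωmap (b x' : H) : H ⊗[ℂ] (H ⊗[ℂ] H) →ₗ[ℂ] H :=
  TensorProduct.lift <|
    (TensorProduct.lift.equiv (RingHom.id ℂ) H H H).toLinearMap ∘ₗ
      (LinearMap.llcomp ℂ H H (H →ₗ[ℂ] H) (sw2 ∘ₗ Δ).flip) ∘ₗ
        (LinearMap.mul ℂ H).flip ∘ₗ fbm b x'

@[simp] lemma Ωmap_tmul (b x' u : H) (t : H ⊗[ℂ] H) :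
    Ωmap b x' (u ⊗ₜ[ℂ] t) = Cmap (S b * (S u * x')) t := by
  induction t using TensorProduct.induction_on with
  | zero => simp
  | tmul v w => rfl
  | add t₁ t₂ ih₁ ih₂ => rw [TensorProduct.tmul_add, map_add, ih₁, ih₂, ← map_add]

lemma Ωmap_comul2 (hS : ∀ x : H, S (S x) = x) (b x' h : H) :
    Ωmap b x' (Δ2 h) = S b * sw2 (Δ h) x' := by
  have r := Coalgebra.Repr.arbitrary ℂ h
  have h2 : ∑ i ∈ r.index, r.left i ⊗ₜ[ℂ] Δ (r.right i) = Δ2 h := by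
    have : Δ2 h = (LinearMap.lTensor H Δ) (Δ h) := rfl
    rw [this, ← r.eq, map_sum]
    simp only [LinearMap.lTensor_tmul]
  rw [← h2, map_sum]
  have step : ∀ i ∈ r.index,
      Ωmap b x' (r.left i ⊗ₜ[ℂ] Δ (r.right i)) = (S b * (S (r.left i) * x')) * r.right i := by
    intro i _
    rw [Ωmap_tmul, Cmap_comul hS]
  rw [Finset.sum_congr rfl step, ← r.eq, map_sum, LinearMap.sum_apply, Finset.mul_sum]
  refine Finset.sum_congr rfl fun i _ => ?_
  simp [mul_assoc]

/-- The composite edge operators `M^{(a,h)}₊ = T^a₊ ∘ L^h₊` define a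
left action of the mirror bicrossproduct `M(H)` on `H*`: `M^{(1,1)}₊ = id` and, for all
`a, b, h, g ∈ H` and every Sweedler representation `Δ² h = Σ h₁ ⊗ h₂ ⊗ h₃`,
`M^{(a,h)}₊ ∘ M^{(b,g)}₊ = Σ M^{(a (h₁ b S(h₂)), h₃ g)}₊`. -/
theorem statement7 [FiniteDimensional ℂ H] (hS : ∀ x : H, S (S x) = x) :
    Mp (1 : H) (1 : H) = LinearMap.id ∧
    ∀ (a b h g : H) (ι : Type) (s : Finset ι) (h1 h2 h3 : ι → H),
      (∑ i ∈ s, h1 i ⊗ₜ[ℂ] (h2 i ⊗ₜ[ℂ] h3 i)) = Δ2 h →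
      Mp a h ∘ₗ Mp b g = ∑ i ∈ s, Mp (a * (h1 i * b * S (h2 i))) (h3 i * g) := by
  constructor
  · apply LinearMap.ext; intro φ; apply LinearMap.ext; intro x
    simp [Mp, Tp, Lp, antipode_one, Bialgebra.comul_one, Algebra.TensorProduct.one_def,
      LinearMap.dualMap_apply]
  · intro a b h g ι s h1 h2 h3 hrep
    apply LinearMap.ext; intro φ; apply LinearMap.ext; intro x
    have hMp : ∀ (c k : H) (ψ : Module.Dual ℂ H) (z : H),
        Mp c k ψ z = ψ (sw2 (Δ k) (S c * z)) := by
      intro c k ψ z; rfl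
    have main : ∑ i ∈ s, sw2 (Δ (h3 i * g)) (S (a * (h1 i * b * S (h2 i))) * x)
        = sw2 (Δ g) (S b * sw2 (Δ h) (S a * x)) := by
      have t1 : ∀ i ∈ s, sw2 (Δ (h3 i * g)) (S (a * (h1 i * b * S (h2 i))) * x)
          = sw2 (Δ g) (Ωmap b (S a * x) (h1 i ⊗ₜ[ℂ] (h2 i ⊗ₜ[ℂ] h3 i))) := by
        intro i _
        rw [Bialgebra.comul_mul, sw2_mul, Ωmap_tmul, Cmap_tmul]
        congr 1
        simp only [antipode_mul, hS]
        simp only [mul_assoc]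
      rw [Finset.sum_congr rfl t1, ← map_sum, ← map_sum, hrep, Ωmap_comul2 hS]
    calc (Mp a h ∘ₗ Mp b g) φ x
        = φ (sw2 (Δ g) (S b * sw2 (Δ h) (S a * x))) := by
          rw [LinearMap.comp_apply, hMp, hMp]
      _ = φ (∑ i ∈ s, sw2 (Δ (h3 i * g)) (S (a * (h1 i * b * S (h2 i))) * x)) := by
          rw [main]
      _ = (∑ i ∈ s, Mp (a * (h1 i * b * S (h2 i))) (h3 i * g)) φ x := by
          rw [map_sum, LinearMap.sum_apply, LinearMap.sum_apply]
          exact Finset.sum_congr rfl fun i _ => (hMp _ _ φ x).symm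

end SemidualKitaev
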